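/- Fix B ≥ 2 and elevations θ_1,…,θ_m ∈ [0,π]. For every choice of azimuths φ_1,…,φ_m ∈ [0,2π) for which all columns of the spherical-harmonic sensing matrix A ∈ ℂ^{m×B^2} are nonzero, and for all integers l ≠ r with 0 ≤ l, r ≤ B−1 and all integers k with |k| ≤ min(l,r), the mutual coherence satisfies μ(A) ≥ |Σ_{p=1}^m P_l^k(cos θ_p) P_r^k(cos θ_p)| / ((Σ_{p=1}^m P_l^k(cos θ_p)^2)^{1/2} · (Σ_{p=1}^m P_r^k(cos θ_p)^2)^{1/2}). -/

import Mathlib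

open scoped Real BigOperators

/-- Associated Legendre polynomial `P_l^k(x)` for integer order `k` (possibly negative). -/
noncomputable def assocLegendre (l : ℕ) (k : ℤ) (x : ℝ) : ℝ :=
  ((-1 : ℝ) ^ k / (2 ^ l * (Nat.factorial l : ℝ))) * (1 - x ^ 2) ^ ((k : ℝ) / 2) *
    iteratedDeriv (k + (l : ℤ)).toNat (fun y : ℝ => (y ^ 2 - 1) ^ l) x

/-- Normalization factor of spherical harmonics. -/
noncomputable def shNormFactor (l : ℕ) (k : ℤ) : ℝ :=
  Real.sqrt ((2 * (l : ℝ) + 1) / (4 * Real.pi) *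
    ((Nat.factorial ((l : ℤ) - k).toNat : ℝ) / (Nat.factorial ((l : ℤ) + k).toNat : ℝ)))

/-- Spherical harmonic `Y_l^k(θ,φ)`. -/
noncomputable def sphericalHarmonic (l : ℕ) (k : ℤ) (θ φ : ℝ) : ℂ :=
  ((shNormFactor l k * assocLegendre l k (Real.cos θ) : ℝ) : ℂ) *
    Complex.exp (Complex.I * (k : ℂ) * (φ : ℂ))

/-- Jacobi polynomial `P_α^{(ξ,λ)}(x)`. -/
noncomputable def jacobiP (a ξ lam : ℕ) (x : ℝ) : ℝ :=
  ((-1 : ℝ) ^ a / (2 ^ a * (Nat.factorial a : ℝ))) * (1 - x) ^ (-(ξ : ℤ)) *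
    (1 + x) ^ (-(lam : ℤ)) *
    iteratedDeriv a (fun y : ℝ => (1 - y) ^ ξ * (1 + y) ^ lam * (1 - y ^ 2) ^ a) x

/-- The coefficient `γ = α!(α+ξ+λ)!/((α+ξ)!(α+λ)!)`. -/
noncomputable def jacobiGamma (a ξ lam : ℕ) : ℝ :=
  ((Nat.factorial a : ℝ) * (Nat.factorial (a + ξ + lam) : ℝ)) /
    ((Nat.factorial (a + ξ) : ℝ) * (Nat.factorial (a + lam) : ℝ))

/-- Wigner d-function `d_l^{k,n}(cos θ)` (as a function of `θ`). -/
noncomputable def wignerd (l : ℕ) (k n : ℤ) (θ : ℝ) : ℝ :=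
  let ξ : ℕ := (k - n).natAbs
  let lam : ℕ := (k + n).natAbs
  let a : ℕ := l - (ξ + lam) / 2
  let ω : ℝ := if k ≤ n then 1 else (-1 : ℝ) ^ (n - k)
  ω * Real.sqrt (jacobiGamma a ξ lam) * (Real.sin (θ / 2)) ^ ξ * (Real.cos (θ / 2)) ^ lam *
    jacobiP a ξ lam (Real.cos θ)

/-- Wigner D-function `D_l^{k,n}(θ,φ,χ)`. -/
noncomputable def wignerD (l : ℕ) (k n : ℤ) (θ φ χ : ℝ) : ℂ :=
  ((Real.sqrt ((2 * (l : ℝ) + 1) / (8 * Real.pi ^ 2)) : ℝ) : ℂ) *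
    Complex.exp (-(Complex.I * (k : ℂ) * (φ : ℂ))) * ((wignerd l k n θ : ℝ) : ℂ) *
    Complex.exp (-(Complex.I * (n : ℂ) * (χ : ℂ)))

/-- Column index set for the spherical-harmonic sensing matrix: pairs `(l,k)`,
`0 ≤ l ≤ B-1`, `-l ≤ k ≤ l`.  It has `B^2` elements. -/
abbrev SHIndex (B : ℕ) := Σ l : Fin B, ↥(Set.Icc (-(l.1 : ℤ)) (l.1 : ℤ))

/-- Column index set for the Wigner-D sensing matrix: triples `(l,k,n)`,
`0 ≤ l ≤ B-1`, `-l ≤ k,n ≤ l`.  It has `B(2B-1)(2B+1)/3` elements. -/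
abbrev WDIndex (B : ℕ) :=
  Σ l : Fin B, ↥(Set.Icc (-(l.1 : ℤ)) (l.1 : ℤ)) × ↥(Set.Icc (-(l.1 : ℤ)) (l.1 : ℤ))

/-- The spherical-harmonic sensing matrix. -/
noncomputable def shMatrix {m : ℕ} (B : ℕ) (θ φ : Fin m → ℝ) :
    Matrix (Fin m) (SHIndex B) ℂ :=
  fun p i => sphericalHarmonic i.1.1 i.2.1 (θ p) (φ p)

/-- The Wigner-D sensing matrix. -/
noncomputable def wdMatrix {m : ℕ} (B : ℕ) (θ φ χ : Fin m → ℝ) :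
    Matrix (Fin m) (WDIndex B) ℂ :=
  fun p i => wignerD i.1.1 i.2.1.1 i.2.2.1 (θ p) (φ p) (χ p)

/-- Mutual coherence of a matrix: the supremum over pairs of distinct columns of the
normalized absolute inner product. -/
noncomputable def mutualCoherence {m : ℕ} {ι : Type*} (A : Matrix (Fin m) ι ℂ) : ℝ :=
  sSup {x : ℝ | ∃ i j : ι, i ≠ j ∧
    x = ‖∑ p, (starRingEnd ℂ) (A p i) * A p j‖ /
        (Real.sqrt (∑ p, Complex.normSq (A p i)) * Real.sqrt (∑ p, Complex.normSq (A p j)))}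


lemma shNormFactor_pos (l : ℕ) (k : ℤ) : 0 < shNormFactor l k := by
  apply Real.sqrt_pos.mpr
  have h2 : 0 < ((((l : ℤ) - k).toNat.factorial : ℕ) : ℝ) := by
    exact_mod_cast Nat.factorial_pos _
  have h3 : 0 < ((((l : ℤ) + k).toNat.factorial : ℕ) : ℝ) := by
    exact_mod_cast Nat.factorial_pos _
  have hpi := Real.pi_pos
  positivity

lemma conj_mul_sh (l r : ℕ) (k : ℤ) (t f : ℝ) :
    (starRingEnd ℂ) (sphericalHarmonic l k t f) * sphericalHarmonic r k t f =
      (((shNormFactor l k * assocLegendre l k (Real.cos t)) *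
        (shNormFactor r k * assocLegendre r k (Real.cos t)) : ℝ) : ℂ) := by
  unfold sphericalHarmonic
  have h : (starRingEnd ℂ) (Complex.exp (Complex.I * (k : ℂ) * (f : ℂ))) *
      Complex.exp (Complex.I * (k : ℂ) * (f : ℂ)) = 1 := by
    rw [← Complex.exp_conj, ← Complex.exp_add]
    have : (starRingEnd ℂ) (Complex.I * (k : ℂ) * (f : ℂ)) = -(Complex.I * (k : ℂ) * (f : ℂ)) := by
      simp [map_mul, Complex.conj_I, Complex.conj_ofReal]
    rw [this]
    simp
  rw [map_mul, Complex.conj_ofReal]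
  push_cast
  calc ((shNormFactor l k : ℂ) * (assocLegendre l k (Real.cos t) : ℂ)) *
      ((starRingEnd ℂ) (Complex.exp (Complex.I * (k : ℂ) * (f : ℂ)))) *
      ((shNormFactor r k * assocLegendre r k (Real.cos t) : ℂ) *
        Complex.exp (Complex.I * (k : ℂ) * (f : ℂ)))
      = ((shNormFactor l k : ℂ) * (assocLegendre l k (Real.cos t) : ℂ)) *
        ((shNormFactor r k * assocLegendre r k (Real.cos t) : ℂ)) *
        ((starRingEnd ℂ) (Complex.exp (Complex.I * (k : ℂ) * (f : ℂ))) *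
          Complex.exp (Complex.I * (k : ℂ) * (f : ℂ))) := by ring
    _ = _ := by rw [h]; push_cast; ring

lemma normSq_sh (l : ℕ) (k : ℤ) (t f : ℝ) :
    Complex.normSq (sphericalHarmonic l k t f) =
      (shNormFactor l k * assocLegendre l k (Real.cos t)) ^ 2 := by
  unfold sphericalHarmonic
  rw [Complex.normSq_mul, Complex.normSq_ofReal, Complex.normSq_eq_norm_sq, Complex.norm_exp]
  simp [sq]


/-- lower bound on the mutual coherence of the spherical-harmonic sensing matrix
in terms of the (fixed) elevation samples only. -/
theorem shMatrix_coherence_lower_bound (B m : ℕ) (hB : 2 ≤ B)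
    (θ φ : Fin m → ℝ)
    (hθ : ∀ p, θ p ∈ Set.Icc 0 Real.pi) (hφ : ∀ p, φ p ∈ Set.Ico 0 (2 * Real.pi))
    (hcols : ∀ i : SHIndex B, ∃ p, shMatrix B θ φ p i ≠ 0)
    (l r : ℕ) (hlr : l ≠ r) (hl : l ≤ B - 1) (hr : r ≤ B - 1)
    (k : ℤ) (hk : k.natAbs ≤ min l r) :
    mutualCoherence (shMatrix B θ φ) ≥
      |∑ p, assocLegendre l k (Real.cos (θ p)) * assocLegendre r k (Real.cos (θ p))| /
        (Real.sqrt (∑ p, (assocLegendre l k (Real.cos (θ p))) ^ 2) *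
          Real.sqrt (∑ p, (assocLegendre r k (Real.cos (θ p))) ^ 2)) := by
  have hkl : k ∈ Set.Icc (-(l : ℤ)) (l : ℤ) := by
    rw [Set.mem_Icc]
    have h1 : k.natAbs ≤ l := le_trans hk (min_le_left _ _)
    omega
  have hkr : k ∈ Set.Icc (-(r : ℤ)) (r : ℤ) := by
    rw [Set.mem_Icc]
    have h1 : k.natAbs ≤ r := le_trans hk (min_le_right _ _)
    omega
  have hlB : l < B := by omega
  have hrB : r < B := by omega
  set i : SHIndex B := ⟨⟨l, hlB⟩, ⟨k, hkl⟩⟩ with hi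
  set j : SHIndex B := ⟨⟨r, hrB⟩, ⟨k, hkr⟩⟩ with hj
  have hij : i ≠ j := by
    intro h
    exact hlr (by simpa [hi, hj] using congrArg (fun x => x.1.1) h)
  set Nl := shNormFactor l k with hNl
  set Nr := shNormFactor r k with hNr
  have hNlpos := shNormFactor_pos l k
  have hNrpos := shNormFactor_pos r k
  set Pl : Fin m → ℝ := fun p => assocLegendre l k (Real.cos (θ p)) with hPl
  set Pr : Fin m → ℝ := fun p => assocLegendre r k (Real.cos (θ p)) with hPr
  -- compute the inner product
  have hinner : (∑ p, (starRingEnd ℂ) (shMatrix B θ φ p i) * shMatrix B θ φ p j) =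
      (((Nl * Nr) * ∑ p, Pl p * Pr p : ℝ) : ℂ) := by
    rw [Finset.mul_sum]
    push_cast
    apply Finset.sum_congr rfl
    intro p _
    rw [show shMatrix B θ φ p i = sphericalHarmonic l k (θ p) (φ p) from rfl,
      show shMatrix B θ φ p j = sphericalHarmonic r k (θ p) (φ p) from rfl,
      conj_mul_sh]
    push_cast
    ring
  have hnormi : (∑ p, Complex.normSq (shMatrix B θ φ p i)) = Nl ^ 2 * ∑ p, Pl p ^ 2 := by
    rw [Finset.mul_sum]
    apply Finset.sum_congr rfl
    intro p _
    rw [show shMatrix B θ φ p i = sphericalHarmonic l k (θ p) (φ p) from rfl, normSq_sh]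
    ring
  have hnormj : (∑ p, Complex.normSq (shMatrix B θ φ p j)) = Nr ^ 2 * ∑ p, Pr p ^ 2 := by
    rw [Finset.mul_sum]
    apply Finset.sum_congr rfl
    intro p _
    rw [show shMatrix B θ φ p j = sphericalHarmonic r k (θ p) (φ p) from rfl, normSq_sh]
    ring
  -- membership
  have hmem : (|∑ p, Pl p * Pr p| /
      (Real.sqrt (∑ p, Pl p ^ 2) * Real.sqrt (∑ p, Pr p ^ 2))) ∈
      {x : ℝ | ∃ i j : SHIndex B, i ≠ j ∧
        x = ‖∑ p, (starRingEnd ℂ) (shMatrix B θ φ p i) * shMatrix B θ φ p j‖ /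
          (Real.sqrt (∑ p, Complex.normSq (shMatrix B θ φ p i)) *
            Real.sqrt (∑ p, Complex.normSq (shMatrix B θ φ p j)))} := by
    refine ⟨i, j, hij, ?_⟩
    rw [hinner, hnormi, hnormj, Complex.norm_real, Real.norm_eq_abs,
      Real.sqrt_mul (sq_nonneg Nl), Real.sqrt_mul (sq_nonneg Nr),
      Real.sqrt_sq hNlpos.le, Real.sqrt_sq hNrpos.le, abs_mul,
      abs_of_pos (mul_pos hNlpos hNrpos)]
    rw [show Nl * Real.sqrt (∑ p, Pl p ^ 2) * (Nr * Real.sqrt (∑ p, Pr p ^ 2)) =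
      (Nl * Nr) * (Real.sqrt (∑ p, Pl p ^ 2) * Real.sqrt (∑ p, Pr p ^ 2)) by ring,
      mul_div_mul_left _ _ (ne_of_gt (mul_pos hNlpos hNrpos))]
  -- bounded above by 1
  have hbdd : BddAbove {x : ℝ | ∃ i j : SHIndex B, i ≠ j ∧
      x = ‖∑ p, (starRingEnd ℂ) (shMatrix B θ φ p i) * shMatrix B θ φ p j‖ /
        (Real.sqrt (∑ p, Complex.normSq (shMatrix B θ φ p i)) *
          Real.sqrt (∑ p, Complex.normSq (shMatrix B θ φ p j)))} := by
    refine ⟨1, fun x hx => ?_⟩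
    obtain ⟨a, b, -, rfl⟩ := hx
    set A := shMatrix B θ φ
    have hden : 0 ≤ Real.sqrt (∑ p, Complex.normSq (A p a)) *
        Real.sqrt (∑ p, Complex.normSq (A p b)) :=
      mul_nonneg (Real.sqrt_nonneg _) (Real.sqrt_nonneg _)
    rcases eq_or_lt_of_le hden with h0 | h0
    · rw [← h0, div_zero]; exact zero_le_one
    rw [div_le_one h0]
    calc ‖∑ p, (starRingEnd ℂ) (A p a) * A p b‖
        ≤ ∑ p, ‖(starRingEnd ℂ) (A p a) * A p b‖ :=
          norm_sum_le _ _
      _ = ∑ p, ‖A p a‖ * ‖A p b‖ := by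
          simp [map_mul]
      _ ≤ Real.sqrt (∑ p, ‖A p a‖ ^ 2) *
          Real.sqrt (∑ p, ‖A p b‖ ^ 2) :=
          Real.sum_mul_le_sqrt_mul_sqrt _ _ _
      _ = Real.sqrt (∑ p, Complex.normSq (A p a)) *
          Real.sqrt (∑ p, Complex.normSq (A p b)) := by
          simp [Complex.sq_norm]
  exact le_csSup hbdd hmem
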